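/- arXiv:2001.03936 — 2 statements merged into one kernel-verified Lean document; each statement's English description precedes it below -/
import Mathlib

section
/- For all n ∈ ℕ⁺, vectors a, x, y ∈ (ℝ≥0)^n and reals b, c ≥ 0, letting F = (∑_i a_i x_i + b)·(∑_i a_i y_i + c) and F_i = ((∑_j a_j)·x_i + b)·((∑_j a_j)·y_i + c), there exists an index i with F_i ≤ F. -/
theorem stmt4 (n : ℕ) (hn : 0 < n) (a x y : Fin n → ℝ) (b c : ℝ)
    (ha : ∀ i, 0 ≤ a i) (hx : ∀ i, 0 ≤ x i) (hy : ∀ i, 0 ≤ y i)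
    (hb : 0 ≤ b) (hc : 0 ≤ c) :
    ∃ i : Fin n, ((∑ j, a j) * x i + b) * ((∑ j, a j) * y i + c) ≤
      ((∑ i, a i * x i) + b) * ((∑ i, a i * y i) + c) := by
  have : Nonempty (Fin n) := ⟨⟨0, hn⟩⟩
  set S : ℝ := ∑ j, a j with hSdef
  have hS0 : 0 ≤ S := Finset.sum_nonneg fun i _ => ha i
  by_cases hS : S = 0
  · have hA : ∀ i, a i = 0 := fun i =>
      (Finset.sum_eq_zero_iff_of_nonneg (fun i _ => ha i)).mp hS i (Finset.mem_univ i)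
    refine ⟨⟨0, hn⟩, ?_⟩
    simp [hS, hA]
  · have hSpos : 0 < S := lt_of_le_of_ne hS0 (Ne.symm hS)
    set u : Fin n → ℝ := fun i => S * x i + b with hu
    set v : Fin n → ℝ := fun i => S * y i + c with hv
    have hun : ∀ i, 0 ≤ u i := fun i => add_nonneg (mul_nonneg hS0 (hx i)) hb
    have hvn : ∀ i, 0 ≤ v i := fun i => add_nonneg (mul_nonneg hS0 (hy i)) hc
    obtain ⟨i₀, -, hmin⟩ := Finset.exists_min_image Finset.univ (fun i => u i * v i)
      ⟨⟨0, hn⟩, Finset.mem_univ _⟩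
    have hmin' : ∀ j, u i₀ * v i₀ ≤ u j * v j := fun j => hmin j (Finset.mem_univ j)
    refine ⟨i₀, ?_⟩
    set m : ℝ := u i₀ * v i₀ with hm
    have hmn : 0 ≤ m := mul_nonneg (hun i₀) (hvn i₀)
    -- key pointwise inequality
    have hpt : ∀ i j : Fin n, 2 * (a i * a j * m) ≤
        (a i * u i) * (a j * v j) + (a j * u j) * (a i * v i) := by
      intro i j
      have h1 : 2 * m ≤ u i * v j + u j * v i := by
        nlinarith [sq_nonneg (u i * v j - u j * v i), sq_nonneg (u i * v j + u j * v i),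
          mul_nonneg (hun i) (hvn j), mul_nonneg (hun j) (hvn i),
          mul_nonneg (sub_nonneg.mpr (hmin' i)) (sub_nonneg.mpr (hmin' j)), hmn,
          hmin' i, hmin' j]
      have h2 : 0 ≤ a i * a j := mul_nonneg (ha i) (ha j)
      nlinarith [mul_le_mul_of_nonneg_left h1 h2]
    have key : 2 * (∑ i, ∑ j, a i * a j * m) ≤
        2 * (∑ i, ∑ j, (a i * u i) * (a j * v j)) := by
      have hsym : (∑ i, ∑ j, (a j * u j) * (a i * v i)) =
          ∑ i, ∑ j, (a i * u i) * (a j * v j) := by rw [Finset.sum_comm]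
      calc 2 * (∑ i, ∑ j, a i * a j * m)
          = ∑ i, ∑ j, 2 * (a i * a j * m) := by
            rw [Finset.mul_sum]; exact Finset.sum_congr rfl fun i _ => Finset.mul_sum _ _ _
        _ ≤ ∑ i, ∑ j, ((a i * u i) * (a j * v j) + (a j * u j) * (a i * v i)) := by
            refine Finset.sum_le_sum fun i _ => Finset.sum_le_sum fun j _ => hpt i j
        _ = (∑ i, ∑ j, (a i * u i) * (a j * v j)) +
            (∑ i, ∑ j, (a j * u j) * (a i * v i)) := by
            rw [← Finset.sum_add_distrib]
            exact Finset.sum_congr rfl fun i _ => Finset.sum_add_distrib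
        _ = 2 * (∑ i, ∑ j, (a i * u i) * (a j * v j)) := by rw [hsym]; ring
    have key' : (∑ i, ∑ j, a i * a j * m) ≤ ∑ i, ∑ j, (a i * u i) * (a j * v j) :=
      le_of_mul_le_mul_left key two_pos
    have e1 : (∑ i, ∑ j, a i * a j * m) = S * S * m := by
      rw [hSdef, Finset.sum_mul_sum, Finset.sum_mul]
      exact Finset.sum_congr rfl fun i _ => by
        rw [Finset.sum_mul]
    have e2 : (∑ i, ∑ j, (a i * u i) * (a j * v j)) = (∑ i, a i * u i) * (∑ j, a j * v j) :=
      (Finset.sum_mul_sum _ _ _ _).symm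
    have e3 : (∑ i, a i * u i) = S * ((∑ i, a i * x i) + b) := by
      simp only [hu, mul_add, Finset.sum_add_distrib, mul_add, Finset.mul_sum, ← Finset.sum_mul]
      ring_nf
      rw [add_comm, hSdef]; congr 1
      exact Finset.sum_congr rfl fun i _ => by ring
    have e4 : (∑ i, a i * v i) = S * ((∑ i, a i * y i) + c) := by
      simp only [hv, mul_add, Finset.sum_add_distrib, mul_add, Finset.mul_sum, ← Finset.sum_mul]
      ring_nf
      rw [add_comm, hSdef]; congr 1
      exact Finset.sum_congr rfl fun i _ => by ring
    have final : S * S * m ≤ S * S * (((∑ i, a i * x i) + b) * ((∑ i, a i * y i) + c)) := by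
      rw [← e1]
      calc (∑ i, ∑ j, a i * a j * m) ≤ ∑ i, ∑ j, (a i * u i) * (a j * v j) := key'
        _ = (S * ((∑ i, a i * x i) + b)) * (S * ((∑ i, a i * y i) + c)) := by
            rw [e2, e3, e4]
        _ = S * S * (((∑ i, a i * x i) + b) * ((∑ i, a i * y i) + c)) := by ring
    have := le_of_mul_le_mul_left final (by positivity : (0:ℝ) < S * S)
    simpa [hm, hu, hv] using this
end

section
/- Let C ≥ 1 and 0 < p ≤ C/n for a positive integer n ≥ 2. For t with 1 ≤ t ≤ n/2, the quantity p·(1−p/C)^{t−1}·((1−p/C)^{n−t} − (1−2p/C)^{n−t})·x is at least x·p²·n/(4e²·C), for any x ∈ (0,1]. -/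
set_option maxHeartbeats 1000000 in
theorem stmt10 (C : ℝ) (hC : 1 ≤ C) (n : ℕ) (hn : 2 ≤ n) (p : ℝ)
    (hp : 0 < p) (hpn : p ≤ C / n) (t : ℕ) (ht1 : 1 ≤ t)
    (ht2 : (t : ℝ) ≤ (n : ℝ) / 2) (x : ℝ) (hx0 : 0 < x) (hx1 : x ≤ 1) :
    x * p ^ 2 * n / (4 * Real.exp 2 * C) ≤
      p * (1 - p / C) ^ (t - 1) *
        ((1 - p / C) ^ (n - t) - (1 - 2 * p / C) ^ (n - t)) * x := by
  have hC0 : (0:ℝ) < C := lt_of_lt_of_le one_pos hC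
  have hn0 : (0:ℝ) < n := by positivity
  have hn2 : (2:ℝ) ≤ (n:ℝ) := by exact_mod_cast hn
  set q : ℝ := p / C with hqdef
  have hq0 : 0 < q := div_pos hp hC0
  have hpn' : p * n ≤ C := by
    have := (le_div_iff₀ hn0).mp hpn; linarith
  have hqn : q * n ≤ 1 := by
    rw [hqdef, div_mul_eq_mul_div, div_le_one hC0]; exact hpn'
  have hq2 : q ≤ 1/2 := by nlinarith
  have h1q : (0:ℝ) < 1 - q := by linarith
  have h2q : (0:ℝ) ≤ 1 - 2*q := by linarith
  have ht_le_n : t ≤ n := by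
    have : (t:ℝ) ≤ n := by linarith
    exact_mod_cast this
  set m : ℕ := n - t with hmdef
  have hmcast : (m:ℝ) = (n:ℝ) - t := by rw [hmdef, Nat.cast_sub ht_le_n]
  have hm2 : (n:ℝ)/2 ≤ (m:ℝ) := by rw [hmcast]; linarith
  -- Step B : exp(-2) ≤ (1-q)^(n-1)
  have hlog : -(2*q) ≤ Real.log (1 - q) := by
    have h1 : Real.log (1 - q)⁻¹ ≤ (1 - q)⁻¹ - 1 :=
      Real.log_le_sub_one_of_pos (by positivity)
    rw [Real.log_inv] at h1
    have hI : 0 < (1 - q)⁻¹ := inv_pos.mpr h1q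
    have hIc : (1 - q)⁻¹ * (1 - q) = 1 := inv_mul_cancel₀ (ne_of_gt h1q)
    have h2 : (1 - q)⁻¹ - 1 ≤ 2*q := by nlinarith
    linarith
  have hB : Real.exp (-2) ≤ (1 - q) ^ (n - 1) := by
    rw [← Real.exp_log (pow_pos h1q (n-1)), Real.exp_le_exp, Real.log_pow]
    have hn1cast : ((n - 1 : ℕ):ℝ) = (n:ℝ) - 1 := by
      rw [Nat.cast_sub (by omega)]; norm_num
    rw [hn1cast]
    have hlogneg : Real.log (1 - q) ≤ 0 :=
      Real.log_nonpos (le_of_lt h1q) (by linarith)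
    nlinarith
  -- Step C : (1-2q)^m ≤ (1-q)^m * exp(-(m*q))
  have key1 : (1 - 2*q)^m ≤ (1 - q)^m * Real.exp (-((m:ℝ)*q)) := by
    have hbase : 1 - 2*q ≤ (1 - q) * Real.exp (-q) := by
      nlinarith [Real.add_one_le_exp (-q)]
    calc (1 - 2*q)^m ≤ ((1 - q) * Real.exp (-q))^m :=
          pow_le_pow_left₀ h2q hbase m
      _ = (1 - q)^m * Real.exp (-((m:ℝ)*q)) := by
          rw [mul_pow, ← Real.exp_nat_mul]; ring_nf
  -- Step D : exp(-(m*q)) ≤ 1 - n*q/4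
  have key2 : Real.exp (-((m:ℝ)*q)) ≤ 1 - (n:ℝ)*q/4 := by
    have e2 : Real.exp (-((m:ℝ)*q)) ≤ Real.exp (-((n:ℝ)*q/2)) := by
      apply Real.exp_le_exp.mpr; nlinarith
    have e1 : 1 + (n:ℝ)*q/2 ≤ Real.exp ((n:ℝ)*q/2) := by
      have := Real.add_one_le_exp ((n:ℝ)*q/2); linarith
    have e3 : Real.exp (-((n:ℝ)*q/2)) * Real.exp ((n:ℝ)*q/2) = 1 := by
      rw [← Real.exp_add]; simp
    have ep : 0 < Real.exp (-((n:ℝ)*q/2)) := Real.exp_pos _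
    have h4 : Real.exp (-((n:ℝ)*q/2)) * (1 + (n:ℝ)*q/2) ≤ 1 := by
      calc Real.exp (-((n:ℝ)*q/2)) * (1 + (n:ℝ)*q/2)
          ≤ Real.exp (-((n:ℝ)*q/2)) * Real.exp ((n:ℝ)*q/2) :=
            mul_le_mul_of_nonneg_left e1 ep.le
        _ = 1 := e3
    have hz1 : (n:ℝ)*q ≤ 1 := by nlinarith
    have hz0 : 0 ≤ (n:ℝ)*q := by positivity
    have h5 : Real.exp (-((n:ℝ)*q/2)) ≤ 1 - (n:ℝ)*q/4 := by nlinarith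
    linarith
  have key3 : (1 - q)^m * ((n:ℝ)*q/4) ≤ (1 - q)^m - (1 - 2*q)^m := by
    have hp1 : (0:ℝ) < (1 - q)^m := pow_pos h1q m
    nlinarith [mul_le_mul_of_nonneg_left key2 hp1.le]
  have hpow : (1 - q)^(t - 1) * (1 - q)^m = (1 - q)^(n - 1) := by
    rw [← pow_add]; congr 1; omega
  have hposq : 0 < (1 - q)^(t-1) := pow_pos h1q _
  have h2pc : 1 - 2 * p / C = 1 - 2*q := by rw [hqdef]; ring
  rw [h2pc]
  calc x * p ^ 2 * n / (4 * Real.exp 2 * C)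
      = p * Real.exp (-2) * ((n:ℝ)*q/4) * x := by
        rw [Real.exp_neg, hqdef]
        field_simp
    _ ≤ p * (1 - q)^(n-1) * ((n:ℝ)*q/4) * x := by
        have hnq : 0 < (n:ℝ)*q/4 := by positivity
        gcongr
    _ = p * (1 - q)^(t-1) * ((1 - q)^m * ((n:ℝ)*q/4)) * x := by
        rw [← hpow]; ring
    _ ≤ p * (1 - q)^(t-1) * ((1 - q)^m - (1 - 2*q)^m) * x := by gcongr
end
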